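/- Let X and Y be independent exponential random variables with the same rate γ > 0, let σ = 2·min(X,Y)/(X+Y) and P = X+Y. Then for every 0 < ε < 1 and every p > 0, P(σ > ε | P < p) = 1 - ε. -/

import Mathlib

open MeasureTheory ProbabilityTheory Real Set
open scoped ENNReal

private lemma meas_expPDF (γ : ℝ) : Measurable (exponentialPDF γ) :=
  (measurable_exponentialPDFReal γ).ennreal_ofReal

private lemma expPDF_mul_eq {γ : ℝ} (hγ : 0 < γ) {s y : ℝ} (h0 : 0 ≤ y) (h1 : y ≤ s) :
    exponentialPDF γ (s - y) * exponentialPDF γ y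
      = ENNReal.ofReal (γ ^ 2 * rexp (-(γ * s))) := by
  rw [exponentialPDF_of_nonneg (by linarith), exponentialPDF_of_nonneg h0,
    ← ENNReal.ofReal_mul (by positivity)]
  congr 1
  rw [show γ * rexp (-(γ * (s - y))) * (γ * rexp (-(γ * y)))
      = γ ^ 2 * (rexp (-(γ * (s - y))) * rexp (-(γ * y))) from by ring, ← Real.exp_add,
    show -(γ * (s - y)) + -(γ * y) = -(γ * s) from by ring]

private lemma shear_prod_apply {γ : ℝ} (hγ : 0 < γ) {A : Set (ℝ × ℝ)}
    (hA : MeasurableSet A) :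
    (expMeasure γ).prod (expMeasure γ) A
      = ∫⁻ s, ∫⁻ y,
          exponentialPDF γ (s - y) * (exponentialPDF γ y * A.indicator 1 (s - y, y)) := by
  have hf := meas_expPDF γ
  have : IsProbabilityMeasure (expMeasure γ) := isProbabilityMeasure_expMeasure hγ
  have hind : Measurable (A.indicator (1 : ℝ × ℝ → ℝ≥0∞)) := measurable_one.indicator hA
  have hνd : expMeasure γ = volume.withDensity (exponentialPDF γ) := rfl
  have hG : Measurable (fun z : ℝ × ℝ =>
      exponentialPDF γ z.1 * (exponentialPDF γ z.2 * A.indicator 1 z)) :=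
    (hf.comp measurable_fst).mul ((hf.comp measurable_snd).mul hind)
  rw [← lintegral_indicator_one hA, lintegral_prod _ hind.aemeasurable]
  have inner_eq : ∀ x : ℝ, (∫⁻ y, A.indicator 1 (x, y) ∂(expMeasure γ))
      = ∫⁻ y, exponentialPDF γ y * A.indicator 1 (x, y) := by
    intro x
    rw [hνd, lintegral_withDensity_eq_lintegral_mul _ hf
      (show Measurable fun y : ℝ => A.indicator 1 (x, y) from hind.comp measurable_prodMk_left)]
    simp only [Pi.mul_apply]
  simp only [inner_eq]
  rw [hνd, lintegral_withDensity_eq_lintegral_mul _ hf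
    (show Measurable fun x : ℝ => ∫⁻ y, exponentialPDF γ y * A.indicator 1 (x, y) from
      Measurable.lintegral_prod_right (f := fun x y => exponentialPDF γ y * A.indicator 1 (x, y))
        ((hf.comp measurable_snd).mul hind))]
  simp only [Pi.mul_apply]
  have pull : ∀ x : ℝ, exponentialPDF γ x * (∫⁻ y, exponentialPDF γ y * A.indicator 1 (x, y))
      = ∫⁻ y, exponentialPDF γ x * (exponentialPDF γ y * A.indicator 1 (x, y)) := fun x =>
    (lintegral_const_mul _ (show Measurable fun y : ℝ => exponentialPDF γ y * A.indicator 1 (x, y)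
      from hf.mul (hind.comp measurable_prodMk_left))).symm
  simp only [pull]
  rw [lintegral_lintegral_swap hG.aemeasurable]
  have sub : ∀ y : ℝ, (∫⁻ x, exponentialPDF γ x * (exponentialPDF γ y * A.indicator 1 (x, y)))
      = ∫⁻ s, exponentialPDF γ (s - y) * (exponentialPDF γ y * A.indicator 1 (s - y, y)) :=
    fun y => (lintegral_sub_right_eq_self
      (fun x => exponentialPDF γ x * (exponentialPDF γ y * A.indicator 1 (x, y))) y).symm
  simp only [sub]
  exact (lintegral_lintegral_swap (μ := (volume : Measure ℝ)) (ν := (volume : Measure ℝ)) (f := fun s y =>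
      exponentialPDF γ (s - y) * (exponentialPDF γ y * A.indicator 1 (s - y, y)))
    (show Measurable fun z : ℝ × ℝ =>
        exponentialPDF γ (z.1 - z.2) * (exponentialPDF γ z.2 * A.indicator 1 (z.1 - z.2, z.2)) from
      hG.comp ((measurable_fst.sub measurable_snd).prodMk measurable_snd)).aemeasurable).symm

private lemma inner_nonpos (γ : ℝ) (A : Set (ℝ × ℝ)) {s : ℝ} (hs : s ≤ 0) :
    (∫⁻ y, exponentialPDF γ (s - y) * (exponentialPDF γ y * A.indicator 1 (s - y, y))) = 0 := by
  have h : ∀ᵐ y : ℝ,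
      exponentialPDF γ (s - y) * (exponentialPDF γ y * A.indicator 1 (s - y, y)) = 0 := by
    rw [ae_iff]
    refine measure_mono_null (fun y hy => ?_) (measure_singleton (0 : ℝ))
    simp only [Set.mem_setOf_eq] at hy
    simp only [Set.mem_singleton_iff]
    by_contra hy0
    apply hy
    rcases lt_or_gt_of_ne hy0 with h' | h'
    · simp [exponentialPDF_of_neg h']
    · simp [exponentialPDF_of_neg (show s - y < 0 by linarith)]
  rw [lintegral_congr_ae h, lintegral_zero]

private lemma inner_ge (γ p : ℝ) (A : Set (ℝ × ℝ)) (hA : ∀ q ∈ A, q.1 + q.2 < p)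
    {s : ℝ} (hs : p ≤ s) :
    (∫⁻ y, exponentialPDF γ (s - y) * (exponentialPDF γ y * A.indicator 1 (s - y, y))) = 0 := by
  have h : ∀ y : ℝ, A.indicator (1 : ℝ × ℝ → ℝ≥0∞) (s - y, y) = 0 := by
    intro y
    refine Set.indicator_of_notMem (fun hmem => ?_) _
    have := hA _ hmem
    simp only [sub_add_cancel] at this
    linarith
  simp [h]

private lemma innerD_val {γ : ℝ} (hγ : 0 < γ) {p : ℝ} (hp : 0 < p) (s : ℝ) :
    (∫⁻ y, exponentialPDF γ (s - y) * (exponentialPDF γ y *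
        ({q : ℝ × ℝ | q.1 + q.2 < p}).indicator 1 (s - y, y)))
      = (Ioo (0 : ℝ) p).indicator (fun s => ENNReal.ofReal (γ ^ 2 * rexp (-(γ * s)) * s)) s := by
  rcases le_or_gt s 0 with hs | hs
  · rw [inner_nonpos γ _ hs, Set.indicator_of_notMem (fun h => absurd (mem_Ioo.mp h).1 (not_lt.mpr hs))]
  rcases le_or_gt p s with hs' | hs'
  · rw [inner_ge γ p {q : ℝ × ℝ | q.1 + q.2 < p} (fun q hq => hq) hs',
      Set.indicator_of_notMem (fun h => absurd (mem_Ioo.mp h).2 (not_lt.mpr hs'))]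
  · have heq : ∀ y : ℝ, exponentialPDF γ (s - y) * (exponentialPDF γ y *
        ({q : ℝ × ℝ | q.1 + q.2 < p}).indicator 1 (s - y, y))
        = (Icc (0 : ℝ) s).indicator (fun _ => ENNReal.ofReal (γ ^ 2 * rexp (-(γ * s)))) y := by
      intro y
      by_cases hy0 : y < 0
      · rw [Set.indicator_of_notMem (fun h => absurd (mem_Icc.mp h).1 (not_le.mpr hy0))]
        simp [exponentialPDF_of_neg hy0]
      by_cases hys : s < y
      · rw [Set.indicator_of_notMem (fun h => absurd (mem_Icc.mp h).2 (not_le.mpr hys))]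
        simp [exponentialPDF_of_neg (show s - y < 0 by linarith)]
      push_neg at hy0 hys
      rw [Set.indicator_of_mem (mem_Icc.mpr ⟨hy0, hys⟩),
        Set.indicator_of_mem (show (s - y, y) ∈ {q : ℝ × ℝ | q.1 + q.2 < p} by
          simp only [Set.mem_setOf_eq, sub_add_cancel]; exact hs'),
        Pi.one_apply, mul_one, expPDF_mul_eq hγ hy0 hys]
    rw [lintegral_congr heq, lintegral_indicator measurableSet_Icc, setLIntegral_const,
      Real.volume_Icc, sub_zero, ← ENNReal.ofReal_mul (by positivity),
      Set.indicator_of_mem (mem_Ioo.mpr ⟨hs, hs'⟩)]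

private lemma innerN_val {γ : ℝ} (hγ : 0 < γ) {ε p : ℝ} (hε0 : 0 < ε) (hε1 : ε < 1)
    (hp : 0 < p) (s : ℝ) :
    (∫⁻ y, exponentialPDF γ (s - y) * (exponentialPDF γ y *
        ({q : ℝ × ℝ | q.1 + q.2 < p ∧ ε < 2 * min q.1 q.2 / (q.1 + q.2)}).indicator 1
          (s - y, y)))
      = ENNReal.ofReal (1 - ε) *
        (Ioo (0 : ℝ) p).indicator (fun s => ENNReal.ofReal (γ ^ 2 * rexp (-(γ * s)) * s)) s := by
  rcases le_or_gt s 0 with hs | hs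
  · rw [inner_nonpos γ _ hs, Set.indicator_of_notMem (fun h => absurd (mem_Ioo.mp h).1 (not_lt.mpr hs)),
      mul_zero]
  rcases le_or_gt p s with hs' | hs'
  · rw [inner_ge γ p {q : ℝ × ℝ | q.1 + q.2 < p ∧ ε < 2 * min q.1 q.2 / (q.1 + q.2)} (fun q hq => hq.1) hs',
      Set.indicator_of_notMem (fun h => absurd (mem_Ioo.mp h).2 (not_lt.mpr hs')), mul_zero]
  · have heq : ∀ y : ℝ, exponentialPDF γ (s - y) * (exponentialPDF γ y *
        ({q : ℝ × ℝ | q.1 + q.2 < p ∧ ε < 2 * min q.1 q.2 / (q.1 + q.2)}).indicator 1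
          (s - y, y))
        = (Ioo (ε * s / 2) (s - ε * s / 2)).indicator
            (fun _ => ENNReal.ofReal (γ ^ 2 * rexp (-(γ * s)))) y := by
      intro y
      by_cases hmem : y ∈ Ioo (ε * s / 2) (s - ε * s / 2)
      · obtain ⟨h1, h2⟩ := mem_Ioo.mp hmem
        have hy0 : 0 ≤ y := le_of_lt (lt_of_le_of_lt (by positivity) h1)
        have hys : y ≤ s := by nlinarith
        have hin : (s - y, y) ∈
            {q : ℝ × ℝ | q.1 + q.2 < p ∧ ε < 2 * min q.1 q.2 / (q.1 + q.2)} := by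
          simp only [Set.mem_setOf_eq, sub_add_cancel]
          refine ⟨hs', ?_⟩
          rw [lt_div_iff₀ hs]
          rcases le_total (s - y) y with h | h
          · rw [min_eq_left h]; nlinarith
          · rw [min_eq_right h]; nlinarith
        rw [Set.indicator_of_mem (mem_Ioo.mpr ⟨h1, h2⟩),
          Set.indicator_of_mem hin, Pi.one_apply, mul_one, expPDF_mul_eq hγ hy0 hys]
      · rw [Set.indicator_of_notMem hmem]
        by_cases hy0 : y < 0
        · simp [exponentialPDF_of_neg hy0]
        by_cases hys : s < y
        · simp [exponentialPDF_of_neg (show s - y < 0 by linarith)]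
        push_neg at hy0 hys
        have hnotin : (s - y, y) ∉
            {q : ℝ × ℝ | q.1 + q.2 < p ∧ ε < 2 * min q.1 q.2 / (q.1 + q.2)} := by
          simp only [Set.mem_setOf_eq, sub_add_cancel, not_and, not_lt]
          intro _
          rw [div_le_iff₀ hs]
          rcases le_or_gt y (ε * s / 2) with h | h
          · calc 2 * min (s - y) y ≤ 2 * y := by
                  have := min_le_right (s - y) y; linarith
              _ ≤ ε * s := by linarith
          · have h2 : s - ε * s / 2 ≤ y := by
              by_contra hc
              exact hmem ⟨h, lt_of_not_ge hc⟩
            calc 2 * min (s - y) y ≤ 2 * (s - y) := by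
                  have := min_le_left (s - y) y; linarith
              _ ≤ ε * s := by linarith
        simp [Set.indicator_of_notMem hnotin]
    rw [lintegral_congr heq, lintegral_indicator measurableSet_Ioo, setLIntegral_const,
      Real.volume_Ioo, show s - ε * s / 2 - ε * s / 2 = (1 - ε) * s from by ring,
      ENNReal.ofReal_mul (by linarith : (0:ℝ) ≤ 1 - ε),
      Set.indicator_of_mem (mem_Ioo.mpr ⟨hs, hs'⟩),
      ENNReal.ofReal_mul (show (0:ℝ) ≤ γ ^ 2 * rexp (-(γ * s)) by positivity)]
    ring

theorem shape_uniform_given_small_perimeter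
    {Ω : Type*} [MeasurableSpace Ω] (μ : Measure Ω) [IsProbabilityMeasure μ]
    (γ : ℝ) (hγ : 0 < γ) (X Y : Ω → ℝ)
    (hX : Measurable X) (hY : Measurable Y)
    (hXd : μ.map X = expMeasure γ) (hYd : μ.map Y = expMeasure γ)
    (hind : IndepFun X Y μ)
    (ε p : ℝ) (hε0 : 0 < ε) (hε1 : ε < 1) (hp : 0 < p) :
    (μ[|{ω | X ω + Y ω < p}]) {ω | 2 * min (X ω) (Y ω) / (X ω + Y ω) > ε} =
      ENNReal.ofReal (1 - ε) := by
  set AD : Set (ℝ × ℝ) := {q : ℝ × ℝ | q.1 + q.2 < p} with hADdef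
  set AN : Set (ℝ × ℝ) :=
    {q : ℝ × ℝ | q.1 + q.2 < p ∧ ε < 2 * min q.1 q.2 / (q.1 + q.2)} with hANdef
  have hAD : MeasurableSet AD :=
    measurableSet_lt (measurable_fst.add measurable_snd) measurable_const
  have hAN : MeasurableSet AN := by
    refine MeasurableSet.inter hAD ?_
    exact measurableSet_lt measurable_const
      (((measurable_fst.min measurable_snd).const_mul 2).div
        (measurable_fst.add measurable_snd))
  have hmap : μ.map (fun ω => (X ω, Y ω)) = (expMeasure γ).prod (expMeasure γ) := by
    rw [(indepFun_iff_map_prod_eq_prod_map_map hX.aemeasurable hY.aemeasurable).mp hind,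
      hXd, hYd]
  have key : ∀ A : Set (ℝ × ℝ), MeasurableSet A →
      μ ((fun ω => (X ω, Y ω)) ⁻¹' A) = (expMeasure γ).prod (expMeasure γ) A := by
    intro A hA
    rw [← hmap, Measure.map_apply (hX.prodMk hY) hA]
  set g : ℝ → ℝ≥0∞ :=
    (Ioo (0 : ℝ) p).indicator (fun s => ENNReal.ofReal (γ ^ 2 * rexp (-(γ * s)) * s)) with hgdef
  have hgmeas : Measurable g :=
    (((((measurable_id.const_mul γ).neg).exp.const_mul (γ ^ 2)).mul
      measurable_id).ennreal_ofReal).indicator measurableSet_Ioo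
  have hD : (expMeasure γ).prod (expMeasure γ) AD = ∫⁻ s, g s := by
    rw [shear_prod_apply hγ hAD]
    exact lintegral_congr (innerD_val hγ hp)
  have hN : (expMeasure γ).prod (expMeasure γ) AN
      = ENNReal.ofReal (1 - ε) * ∫⁻ s, g s := by
    rw [shear_prod_apply hγ hAN, ← lintegral_const_mul _ hgmeas]
    exact lintegral_congr (innerN_val hγ hε0 hε1 hp)
  have hS : MeasurableSet {ω | X ω + Y ω < p} :=
    measurableSet_lt (hX.add hY) measurable_const
  have hpre1 : {ω | X ω + Y ω < p} = (fun ω => (X ω, Y ω)) ⁻¹' AD := rfl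
  have hpre2 : {ω | X ω + Y ω < p} ∩ {ω | 2 * min (X ω) (Y ω) / (X ω + Y ω) > ε}
      = (fun ω => (X ω, Y ω)) ⁻¹' AN := rfl
  have hμD : μ {ω | X ω + Y ω < p} = ∫⁻ s, g s := by
    rw [hpre1, key AD hAD, hD]
  have hμN : μ ({ω | X ω + Y ω < p} ∩ {ω | 2 * min (X ω) (Y ω) / (X ω + Y ω) > ε})
      = ENNReal.ofReal (1 - ε) * ∫⁻ s, g s := by
    rw [hpre2, key AN hAN, hN]
  have hDpos : 0 < ∫⁻ s, g s := by
    rw [lintegral_pos_iff_support hgmeas]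
    have hsub : Ioo (0:ℝ) p ⊆ Function.support g := by
      intro s hs
      obtain ⟨h1, h2⟩ := mem_Ioo.mp hs
      simp only [Function.mem_support, hgdef]
      rw [Set.indicator_of_mem (mem_Ioo.mpr ⟨h1, h2⟩)]
      exact (ENNReal.ofReal_pos.mpr (by positivity)).ne'
    calc (0:ℝ≥0∞) < volume (Ioo (0:ℝ) p) := by
          rw [Real.volume_Ioo, sub_zero]; exact ENNReal.ofReal_pos.mpr hp
      _ ≤ volume (Function.support g) := measure_mono hsub
  have hfin : μ {ω | X ω + Y ω < p} ≠ ⊤ := measure_ne_top μ _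
  have hne : μ {ω | X ω + Y ω < p} ≠ 0 := by
    rw [hμD]; exact hDpos.ne'
  rw [cond_apply hS, hμN, ← hμD,
    show (μ {ω | X ω + Y ω < p})⁻¹ * (ENNReal.ofReal (1 - ε) * μ {ω | X ω + Y ω < p})
      = ENNReal.ofReal (1 - ε) * ((μ {ω | X ω + Y ω < p})⁻¹ * μ {ω | X ω + Y ω < p}) from by
        ring, ENNReal.inv_mul_cancel hne hfin, mul_one]
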